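/- Let k ≥ h be non-negative integers and let N ≥ 1. Then |V|_N(2k,2h) = Σ_{j=0}^{h} binom(h,j) (−N²/4)^{h−j} Σ_{l=0}^{j} (𝔦N)^{j−l} binom(j,l) (M)_N(2k,j+l), where 𝔦 is the imaginary unit. -/

import Mathlib

open MeasureTheory Complex

noncomputable instance {N : ℕ} : MeasurableSpace (Matrix (Fin N) (Fin N) ℂ) := borel _

noncomputable def Zchar {N : ℕ} (U : Matrix.unitaryGroup (Fin N) ℂ) (θ : ℝ) : ℂ :=
  Matrix.det ((1 : Matrix (Fin N) (Fin N) ℂ)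
    - Complex.exp (-(Complex.I * (θ : ℂ))) • (U : Matrix (Fin N) (Fin N) ℂ))

noncomputable def Vchar {N : ℕ} (θj : Fin N → ℝ) (U : Matrix.unitaryGroup (Fin N) ℂ)
    (θ : ℝ) : ℂ :=
  Complex.exp (Complex.I * N * ((θ : ℂ) + (Real.pi : ℂ)) / 2)
    * Complex.exp (-(Complex.I * ((∑ j, θj j : ℝ) : ℂ)) / 2) * Zchar U θ

noncomputable def Mmom (N k r : ℕ) (μ : Measure (Matrix.unitaryGroup (Fin N) ℂ)) : ℂ :=
  ∫ U, (‖Zchar U 0‖ : ℂ) ^ (2 * k) * (deriv (Zchar U) 0 / Zchar U 0) ^ r ∂μ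

/-! ### Auxiliary lemmas -/

instance {N : ℕ} : BorelSpace (Matrix (Fin N) (Fin N) ℂ) := ⟨rfl⟩

open Finset Polynomial in
lemma Zchar_eq_prod {N : ℕ} (U : Matrix.unitaryGroup (Fin N) ℂ) (w : Fin N → ℂ)
    (hp : (U : Matrix (Fin N) (Fin N) ℂ).charpoly = ∏ j, (X - C (w j))) (θ : ℝ) :
    Zchar U θ = ∏ j, (1 - w j * Complex.exp (-(Complex.I * (θ : ℂ)))) := by
  set y : ℂ := Complex.exp (Complex.I * (θ : ℂ)) with hy
  have hy0 : y ≠ 0 := Complex.exp_ne_zero _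
  have hinv : Complex.exp (-(Complex.I * (θ : ℂ))) = y⁻¹ := by
    rw [hy, ← Complex.exp_neg]
  have hdet : ((U : Matrix (Fin N) (Fin N) ℂ).charpoly).eval y
      = (y • (1 : Matrix (Fin N) (Fin N) ℂ) - (U : Matrix (Fin N) (Fin N) ℂ)).det := by
    rw [Matrix.charpoly, _root_.eval_det, Matrix.matPolyEquiv_charmatrix]
    rw [Polynomial.eval_sub, Polynomial.eval_X, Polynomial.eval_C]
    congr 1
    rw [Matrix.scalar_apply, Matrix.smul_one_eq_diagonal]
  have h1 : (1 : Matrix (Fin N) (Fin N) ℂ) - y⁻¹ • (U : Matrix (Fin N) (Fin N) ℂ)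
      = y⁻¹ • (y • (1 : Matrix (Fin N) (Fin N) ℂ) - (U : Matrix (Fin N) (Fin N) ℂ)) := by
    rw [smul_sub, smul_smul, inv_mul_cancel₀ hy0, one_smul]
  rw [Zchar, hinv, h1, Matrix.det_smul, hdet.symm, hp]
  rw [Polynomial.eval_prod]
  simp only [Polynomial.eval_sub, Polynomial.eval_X, Polynomial.eval_C]
  have hpow : y⁻¹ ^ Fintype.card (Fin N) = ∏ _j : Fin N, y⁻¹ := by simp
  rw [hpow, ← Finset.prod_mul_distrib]
  refine Finset.prod_congr rfl fun j _ => ?_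
  field_simp

lemma hasDerivAt_prodfn {N : ℕ} (w : Fin N → ℂ) (θ0 : ℝ) :
    HasDerivAt (fun θ : ℝ => ∏ j, (1 - w j * Complex.exp (-(Complex.I * (θ : ℂ)))))
      (∑ j, (∏ m ∈ Finset.univ.erase j, (1 - w m * Complex.exp (-(Complex.I * (θ0 : ℂ))))) *
        (Complex.I * w j * Complex.exp (-(Complex.I * (θ0 : ℂ))))) θ0 := by
  have hfac : ∀ j : Fin N,
      HasDerivAt (fun θ : ℝ => 1 - w j * Complex.exp (-(Complex.I * (θ : ℂ))))
        (Complex.I * w j * Complex.exp (-(Complex.I * (θ0 : ℂ)))) θ0 := by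
    intro j
    have hu : HasDerivAt (fun z : ℂ => -(Complex.I * z)) (-Complex.I) (θ0 : ℂ) := by
      simpa using ((hasDerivAt_id ((θ0 : ℂ))).const_mul Complex.I).fun_neg
    have h1 : HasDerivAt (fun z : ℂ => Complex.exp (-(Complex.I * z)))
        (Complex.exp (-(Complex.I * (θ0 : ℂ))) * -Complex.I) (θ0 : ℂ) :=
      (Complex.hasDerivAt_exp (-(Complex.I * (θ0 : ℂ)))).comp (θ0 : ℂ) hu
    have h2 := h1.comp_ofReal
    have h3 := (h2.const_mul (w j)).const_sub 1
    convert h3 using 1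
    all_goals first | rfl | ring
  have h := HasDerivAt.fun_finsetProd (u := Finset.univ) (x := θ0) (fun j _ => hfac j)
  simpa [smul_eq_mul] using h

lemma Zchar_hasDerivAt {N : ℕ} (U : Matrix.unitaryGroup (Fin N) ℂ) (w : Fin N → ℂ)
    (hp : (U : Matrix (Fin N) (Fin N) ℂ).charpoly
      = ∏ j, (Polynomial.X - Polynomial.C (w j))) :
    HasDerivAt (Zchar U)
      (∑ j, (∏ m ∈ Finset.univ.erase j, (1 - w m)) * (Complex.I * w j)) 0 := by
  have hfun : Zchar U = fun θ : ℝ => ∏ j, (1 - w j * Complex.exp (-(Complex.I * (θ : ℂ)))) :=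
    funext (Zchar_eq_prod U w hp)
  rw [hfun]
  simpa using hasDerivAt_prodfn w 0

lemma Zchar_zero_eq {N : ℕ} (U : Matrix.unitaryGroup (Fin N) ℂ) (w : Fin N → ℂ)
    (hp : (U : Matrix (Fin N) (Fin N) ℂ).charpoly
      = ∏ j, (Polynomial.X - Polynomial.C (w j))) :
    Zchar U 0 = ∏ j, (1 - w j) := by
  have := Zchar_eq_prod U w hp 0
  simpa using this

lemma conj_term {w : ℂ} (hw : ‖w‖ = 1) (h1w : 1 - w ≠ 0) :
    (starRingEnd ℂ) (Complex.I * w / (1 - w)) = Complex.I * w / (1 - w) + Complex.I := by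
  have hw0 : w ≠ 0 := by
    intro h; rw [h, norm_zero] at hw; norm_num at hw
  have h1 : w * (starRingEnd ℂ) w = 1 := by
    rw [Complex.mul_conj, Complex.normSq_eq_norm_sq, hw]
    norm_num
  have hcw : (starRingEnd ℂ) w = w⁻¹ := by
    field_simp
    linear_combination h1
  rw [map_div₀, map_mul, map_sub, map_one, Complex.conj_I, hcw]
  have key : 1 - w⁻¹ = -(w⁻¹ * (1 - w)) := by field_simp; ring
  have hne : 1 - w⁻¹ ≠ 0 := by
    rw [key]
    exact neg_ne_zero.mpr (mul_ne_zero (inv_ne_zero hw0) h1w)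
  rw [div_add' _ _ _ h1w, div_eq_div_iff hne h1w]
  linear_combination Complex.I * (mul_inv_cancel₀ hw0)

lemma conj_quot {N : ℕ} (w : Fin N → ℂ) (hw : ∀ j, ‖w j‖ = 1)
    (h0 : (∏ j, (1 - w j)) ≠ 0) :
    (starRingEnd ℂ) ((∑ j, (∏ m ∈ Finset.univ.erase j, (1 - w m)) * (Complex.I * w j))
        / ∏ j, (1 - w j))
      = (∑ j, (∏ m ∈ Finset.univ.erase j, (1 - w m)) * (Complex.I * w j))
          / (∏ j, (1 - w j)) + (N : ℂ) * Complex.I := by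
  have hfac : ∀ j : Fin N, 1 - w j ≠ 0 := fun j =>
    Finset.prod_ne_zero_iff.mp h0 j (Finset.mem_univ j)
  have hterm : ∀ j : Fin N,
      (∏ m ∈ Finset.univ.erase j, (1 - w m)) * (Complex.I * w j) / ∏ m, (1 - w m)
        = Complex.I * w j / (1 - w j) := by
    intro j
    have hEne : (∏ m ∈ Finset.univ.erase j, (1 - w m)) ≠ 0 := by
      exact Finset.prod_ne_zero_iff.mpr fun m _ => hfac m
    have hsplit : (∏ m, (1 - w m))
        = (1 - w j) * ∏ m ∈ Finset.univ.erase j, (1 - w m) :=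
      (Finset.mul_prod_erase _ _ (Finset.mem_univ j)).symm
    rw [hsplit, mul_comm (1 - w j) (∏ m ∈ Finset.univ.erase j, (1 - w m)),
      mul_div_mul_left _ _ hEne]
  rw [Finset.sum_div, map_sum]
  have : ∀ j : Fin N, (starRingEnd ℂ)
      ((∏ m ∈ Finset.univ.erase j, (1 - w m)) * (Complex.I * w j) / ∏ m, (1 - w m))
      = (∏ m ∈ Finset.univ.erase j, (1 - w m)) * (Complex.I * w j) / (∏ m, (1 - w m))
        + Complex.I := by
    intro j
    rw [hterm j, conj_term (hw j) (hfac j), ← hterm j]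
  rw [Finset.sum_congr rfl fun j _ => this j, Finset.sum_add_distrib, Finset.sum_const,
    Finset.card_univ, Fintype.card_fin, nsmul_eq_mul]

lemma alg_sum (N h : ℕ) (z : ℂ) :
    ∑ j ∈ Finset.range (h + 1),
        (Nat.choose h j : ℂ) * (-(N : ℂ) ^ 2 / 4) ^ (h - j)
          * ∑ l ∈ Finset.range (j + 1),
              (Complex.I * N) ^ (j - l) * (Nat.choose j l : ℂ) * z ^ (j + l)
      = ((z + Complex.I * N / 2) ^ 2) ^ h := by
  have hsq : (z + Complex.I * N / 2) ^ 2 = z ^ 2 + Complex.I * N * z + -((N : ℂ) ^ 2 / 4) := by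
    have hI : (Complex.I : ℂ) ^ 2 = -1 := Complex.I_sq
    linear_combination ((N : ℂ) ^ 2 / 4) * hI
  rw [hsq, add_pow]
  refine Finset.sum_congr rfl fun j hj => ?_
  have hinner : (z ^ 2 + Complex.I * N * z) ^ j
      = ∑ l ∈ Finset.range (j + 1),
          (Complex.I * N) ^ (j - l) * (Nat.choose j l : ℂ) * z ^ (j + l) := by
    rw [add_pow]
    refine Finset.sum_congr rfl fun l hl => ?_
    have hlj : l ≤ j := Nat.lt_succ_iff.mp (Finset.mem_range.mp hl)
    have hzz : z ^ (2 * l) * z ^ (j - l) = z ^ (j + l) := by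
      rw [← pow_add]
      congr 1
      omega
    rw [show (Complex.I * (N : ℂ) * z) ^ (j - l)
        = (Complex.I * (N : ℂ)) ^ (j - l) * z ^ (j - l) from mul_pow _ _ _,
      ← pow_mul, ← hzz]
    ring
  rw [hinner]
  have hneg : (-((N : ℂ) ^ 2 / 4)) ^ (h - j) = (-(N : ℂ) ^ 2 / 4) ^ (h - j) := by
    congr 1; ring
  rw [hneg]
  ring

lemma Vchar_eq_mul {N : ℕ} (θv : Fin N → ℝ) (U : Matrix.unitaryGroup (Fin N) ℂ) :
    Vchar θv U = fun θ : ℝ =>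
      (Complex.exp (Complex.I * N * ((θ : ℂ) + (Real.pi : ℂ)) / 2)
        * Complex.exp (-(Complex.I * ((∑ j, θv j : ℝ) : ℂ)) / 2)) * Zchar U θ := rfl

lemma hasDerivAt_c1 {N : ℕ} :
    HasDerivAt (fun θ : ℝ => Complex.exp (Complex.I * N * ((θ : ℂ) + (Real.pi : ℂ)) / 2))
      (Complex.I * N / 2 * Complex.exp (Complex.I * N * (((0 : ℝ) : ℂ) + (Real.pi : ℂ)) / 2))
      0 := by
  have hu : HasDerivAt (fun z : ℂ => Complex.I * N * (z + (Real.pi : ℂ)) / 2)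
      (Complex.I * N / 2) (((0 : ℝ) : ℂ)) := by
    simpa using
      (((hasDerivAt_id (((0 : ℝ) : ℂ))).add_const ((Real.pi : ℂ))).const_mul
        (Complex.I * N)).div_const 2
  have h1 := (Complex.hasDerivAt_exp (Complex.I * N * (((0 : ℝ) : ℂ) + (Real.pi : ℂ)) / 2)).comp
    (((0 : ℝ) : ℂ)) hu
  have h2 := h1.comp_ofReal
  convert h2 using 1
  all_goals first | rfl | ring

lemma norm_one_exps {N : ℕ} (θv : Fin N → ℝ) :
    ‖Complex.exp (Complex.I * N * (((0 : ℝ) : ℂ) + (Real.pi : ℂ)) / 2)‖ = 1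
    ∧ ‖Complex.exp (-(Complex.I * ((∑ j, θv j : ℝ) : ℂ)) / 2)‖ = 1 := by
  constructor
  · have : Complex.I * N * (((0 : ℝ) : ℂ) + (Real.pi : ℂ)) / 2
        = (((N : ℝ) * Real.pi / 2 : ℝ) : ℂ) * Complex.I := by push_cast; ring
    rw [this, Complex.norm_exp_ofReal_mul_I]
  · have : -(Complex.I * ((∑ j, θv j : ℝ) : ℂ)) / 2
        = ((-(∑ j, θv j) / 2 : ℝ) : ℂ) * Complex.I := by push_cast; ring
    rw [this, Complex.norm_exp_ofReal_mul_I]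

lemma master_pointwise {N k h : ℕ} (hkh : h ≤ k)
    (θv : Fin N → ℝ) (U : Matrix.unitaryGroup (Fin N) ℂ)
    (hp : (U : Matrix (Fin N) (Fin N) ℂ).charpoly
      = ∏ j, (Polynomial.X - Polynomial.C (Complex.exp (Complex.I * (θv j : ℂ))))) :
    ((‖Vchar θv U 0‖ ^ (2 * k)
        * ‖deriv (Vchar θv U) 0 / Vchar θv U 0‖ ^ (2 * h) : ℝ) : ℂ)
      = (‖Zchar U 0‖ : ℂ) ^ (2 * k)
        * ((deriv (Zchar U) 0 / Zchar U 0 + Complex.I * N / 2) ^ 2) ^ h := by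
  set w : Fin N → ℂ := fun j => Complex.exp (Complex.I * (θv j : ℂ)) with hwdef
  have hw : ∀ j, ‖w j‖ = 1 := by
    intro j
    rw [hwdef]
    simpa [mul_comm] using Complex.norm_exp_ofReal_mul_I (θv j)
  have hZ0 : Zchar U 0 = ∏ j, (1 - w j) := Zchar_zero_eq U w hp
  set D : ℂ := ∑ j, (∏ m ∈ Finset.univ.erase j, (1 - w m)) * (Complex.I * w j) with hDdef
  have hZD : HasDerivAt (Zchar U) D 0 := Zchar_hasDerivAt U w hp
  have hderiv : deriv (Zchar U) 0 = D := hZD.deriv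
  set c1 : ℂ := Complex.exp (Complex.I * N * (((0 : ℝ) : ℂ) + (Real.pi : ℂ)) / 2) with hc1def
  set c2 : ℂ := Complex.exp (-(Complex.I * ((∑ j, θv j : ℝ) : ℂ)) / 2) with hc2def
  have hc1 : c1 ≠ 0 := Complex.exp_ne_zero _
  have hc2 : c2 ≠ 0 := Complex.exp_ne_zero _
  have hV0 : Vchar θv U 0 = c1 * c2 * Zchar U 0 := rfl
  have hVD : HasDerivAt (Vchar θv U)
      ((Complex.I * N / 2 * c1) * c2 * Zchar U 0 + (c1 * c2) * D) 0 := by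
    rw [Vchar_eq_mul]
    exact ((hasDerivAt_c1 (N := N)).mul_const c2).mul hZD
  have hVderiv : deriv (Vchar θv U) 0
      = (Complex.I * N / 2 * c1) * c2 * Zchar U 0 + (c1 * c2) * D := hVD.deriv
  have hnorms := norm_one_exps (N := N) θv
  have hVZnorm : ‖Vchar θv U 0‖ = ‖Zchar U 0‖ := by
    rw [hV0, norm_mul, norm_mul, hc1def, hc2def, hnorms.1, hnorms.2, one_mul, one_mul]
  by_cases h0 : Zchar U 0 = 0
  · have hV00 : Vchar θv U 0 = 0 := by rw [hV0, h0, mul_zero]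
    rcases Nat.eq_zero_or_pos h with hh | hh
    · subst hh
      simp only [hV00, h0, norm_zero, mul_zero, pow_zero, mul_one]
      push_cast
      try ring
    · have h2k : 2 * k ≠ 0 := by omega
      simp [hV00, h0, zero_pow h2k]
  · -- nonvanishing case
    have hVne : Vchar θv U 0 ≠ 0 := by
      rw [hV0]; exact mul_ne_zero (mul_ne_zero hc1 hc2) h0
    set z : ℂ := deriv (Zchar U) 0 / Zchar U 0 with hzdef
    have hζ : deriv (Vchar θv U) 0 / Vchar θv U 0 = Complex.I * N / 2 + z := by
      rw [hVderiv, hV0, hzdef, hderiv]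
      field_simp
    have hconj : (starRingEnd ℂ) z = z + (N : ℂ) * Complex.I := by
      rw [hzdef, hderiv, hZ0]
      exact conj_quot w hw (hZ0 ▸ h0)
    set ζ : ℂ := deriv (Vchar θv U) 0 / Vchar θv U 0 with hζdef
    have hkey : ((‖ζ‖ ^ 2 : ℝ) : ℂ) = (z + Complex.I * N / 2) ^ 2 := by
      have h1 : ((‖ζ‖ ^ 2 : ℝ) : ℂ) = ζ * (starRingEnd ℂ) ζ := by
        rw [Complex.mul_conj, Complex.normSq_eq_norm_sq]
      rw [h1, hζ, map_add, map_div₀, map_mul, Complex.conj_I, Complex.conj_natCast,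
        Complex.conj_ofNat, hconj]
      ring
    calc ((‖Vchar θv U 0‖ ^ (2 * k) * ‖ζ‖ ^ (2 * h) : ℝ) : ℂ)
        = (‖Zchar U 0‖ : ℂ) ^ (2 * k) * ((‖ζ‖ ^ 2 : ℝ) : ℂ) ^ h := by
          rw [hVZnorm]
          push_cast
          rw [mul_comm 2 h, pow_mul, pow_mul']
      _ = (‖Zchar U 0‖ : ℂ) ^ (2 * k) * ((z + Complex.I * N / 2) ^ 2) ^ h := by rw [hkey]
      _ = (‖Zchar U 0‖ : ℂ) ^ (2 * k) * ((deriv (Zchar U) 0 / Zchar U 0 + Complex.I * N / 2) ^ 2) ^ h := by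
          rw [hzdef]

lemma measurable_Zchar_at {N : ℕ} (θ : ℝ) :
    Measurable fun U : Matrix.unitaryGroup (Fin N) ℂ => Zchar U θ := by
  have hc : Continuous fun M : Matrix (Fin N) (Fin N) ℂ =>
      ((1 : Matrix (Fin N) (Fin N) ℂ) - Complex.exp (-(Complex.I * (θ : ℂ))) • M).det :=
    (continuous_const.fun_sub (continuous_id.fun_const_smul _)).matrix_det
  exact hc.measurable.comp measurable_subtype_coe

lemma measurable_derivZ {N : ℕ} (θj : Matrix.unitaryGroup (Fin N) ℂ → Fin N → ℝ)
    (hθj : ∀ U : Matrix.unitaryGroup (Fin N) ℂ,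
      (U : Matrix (Fin N) (Fin N) ℂ).charpoly
        = ∏ j, (Polynomial.X - Polynomial.C (Complex.exp (Complex.I * (θj U j : ℂ))))) :
    Measurable fun U : Matrix.unitaryGroup (Fin N) ℂ => deriv (Zchar U) 0 := by
  set t : ℕ → ℝ := fun n => ((n : ℝ) + 1)⁻¹ with htdef
  have hmf : ∀ n : ℕ, Measurable
      (fun U : Matrix.unitaryGroup (Fin N) ℂ => (t n)⁻¹ • (Zchar U (t n) - Zchar U 0)) :=
    fun n => ((measurable_Zchar_at (t n)).fun_sub (measurable_Zchar_at 0)).fun_const_smul _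
  apply measurable_of_tendsto_metrizable hmf
  rw [tendsto_pi_nhds]
  intro U
  have hZD := Zchar_hasDerivAt U _ (hθj U)
  have hd' : HasDerivAt (Zchar U) (deriv (Zchar U) 0) 0 := hZD.differentiableAt.hasDerivAt
  have hs := hasDerivAt_iff_tendsto_slope.mp hd'
  have ht : Filter.Tendsto t Filter.atTop (nhdsWithin (0 : ℝ) {(0 : ℝ)}ᶜ) := by
    rw [tendsto_nhdsWithin_iff]
    constructor
    · simpa [htdef, one_div] using tendsto_one_div_add_atTop_nhds_zero_nat (𝕜 := ℝ)
    · filter_upwards with n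
      simp only [Set.mem_compl_iff, Set.mem_singleton_iff, htdef]
      positivity
  have hcomp := hs.comp ht
  refine hcomp.congr fun n => ?_
  simp [slope, vsub_eq_sub, sub_zero]

lemma integrable_g {N k : ℕ} (r : ℕ) (hr : r ≤ 2 * k)
    (μ : Measure (Matrix.unitaryGroup (Fin N) ℂ)) [IsProbabilityMeasure μ]
    (θj : Matrix.unitaryGroup (Fin N) ℂ → Fin N → ℝ)
    (hθj : ∀ U : Matrix.unitaryGroup (Fin N) ℂ,
      (U : Matrix (Fin N) (Fin N) ℂ).charpoly
        = ∏ j, (Polynomial.X - Polynomial.C (Complex.exp (Complex.I * (θj U j : ℂ))))) :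
    Integrable (fun U : Matrix.unitaryGroup (Fin N) ℂ =>
      (‖Zchar U 0‖ : ℂ) ^ (2 * k) * (deriv (Zchar U) 0 / Zchar U 0) ^ r) μ := by
  set C0 : ℝ := ((N : ℝ) + 1) * 2 ^ N with hC0def
  have hN0 : (0 : ℝ) ≤ (N : ℝ) := Nat.cast_nonneg N
  have h2N : (1 : ℝ) ≤ 2 ^ N := one_le_pow₀ one_le_two
  have hC0 : 1 ≤ C0 := by nlinarith
  have hmeas : Measurable (fun U : Matrix.unitaryGroup (Fin N) ℂ =>
      (‖Zchar U 0‖ : ℂ) ^ (2 * k) * (deriv (Zchar U) 0 / Zchar U 0) ^ r) := by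
    have m1 : Measurable fun U : Matrix.unitaryGroup (Fin N) ℂ => ((‖Zchar U 0‖ : ℝ) : ℂ) :=
      Complex.measurable_ofReal.comp (measurable_Zchar_at 0).norm
    exact (m1.pow_const (2 * k)).mul
      (((measurable_derivZ θj hθj).div (measurable_Zchar_at 0)).pow_const r)
  refine (integrable_const (C0 ^ (2 * k))).mono' hmeas.aestronglyMeasurable
    (Filter.Eventually.of_forall fun U => ?_)
  -- pointwise bound
  set w : Fin N → ℂ := fun j => Complex.exp (Complex.I * (θj U j : ℂ)) with hwdef
  have hw : ∀ j, ‖w j‖ = 1 := by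
    intro j
    rw [hwdef]
    simpa [mul_comm] using Complex.norm_exp_ofReal_mul_I (θj U j)
  have hfacle : ∀ j, ‖1 - w j‖ ≤ 2 := by
    intro j
    calc ‖1 - w j‖ ≤ ‖(1 : ℂ)‖ + ‖w j‖ := norm_sub_le _ _
      _ = 2 := by rw [norm_one, hw j]; norm_num
  have hZ0 : Zchar U 0 = ∏ j, (1 - w j) := Zchar_zero_eq U w (hθj U)
  set D : ℂ := ∑ j, (∏ m ∈ Finset.univ.erase j, (1 - w m)) * (Complex.I * w j) with hDdef
  have hderiv : deriv (Zchar U) 0 = D := (Zchar_hasDerivAt U w (hθj U)).deriv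
  have hnormZ : ‖Zchar U 0‖ ≤ C0 := by
    rw [hZ0]
    calc ‖∏ j, (1 - w j)‖ = ∏ j, ‖1 - w j‖ := norm_prod _ _
      _ ≤ ∏ _j : Fin N, (2 : ℝ) :=
          Finset.prod_le_prod (fun j _ => norm_nonneg _) (fun j _ => hfacle j)
      _ = 2 ^ N := by rw [Finset.prod_const, Finset.card_univ, Fintype.card_fin]
      _ ≤ C0 := by nlinarith
  have hterm : ∀ j : Fin N,
      ‖(∏ m ∈ Finset.univ.erase j, (1 - w m)) * (Complex.I * w j)‖ ≤ (2 : ℝ) ^ N := by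
    intro j
    rw [norm_mul, norm_mul, Complex.norm_I, hw j, one_mul, mul_one]
    have hcard : (Finset.univ.erase j).card ≤ N := by
      calc (Finset.univ.erase j).card ≤ (Finset.univ : Finset (Fin N)).card :=
            Finset.card_le_card (Finset.erase_subset _ _)
        _ = N := by rw [Finset.card_univ, Fintype.card_fin]
    calc ‖∏ m ∈ Finset.univ.erase j, (1 - w m)‖
        = ∏ m ∈ Finset.univ.erase j, ‖1 - w m‖ := norm_prod _ _
      _ ≤ ∏ _m ∈ Finset.univ.erase j, (2 : ℝ) :=
          Finset.prod_le_prod (fun m _ => norm_nonneg _) (fun m _ => hfacle m)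
      _ = 2 ^ (Finset.univ.erase j).card := Finset.prod_const _
      _ ≤ 2 ^ N := pow_le_pow_right₀ one_le_two hcard
  have hnormD : ‖D‖ ≤ C0 := by
    rw [hDdef]
    calc ‖∑ j, (∏ m ∈ Finset.univ.erase j, (1 - w m)) * (Complex.I * w j)‖
        ≤ ∑ j, ‖(∏ m ∈ Finset.univ.erase j, (1 - w m)) * (Complex.I * w j)‖ :=
          norm_sum_le _ _
      _ ≤ ∑ _j : Fin N, (2 : ℝ) ^ N := Finset.sum_le_sum fun j _ => hterm j
      _ = (N : ℝ) * 2 ^ N := by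
          rw [Finset.sum_const, Finset.card_univ, Fintype.card_fin, nsmul_eq_mul]
      _ ≤ C0 := by nlinarith
  have hnn : (0 : ℝ) ≤ C0 := le_trans zero_le_one hC0
  rw [norm_mul, norm_pow, norm_pow, Complex.norm_real, Real.norm_eq_abs, abs_norm, hderiv]
  by_cases h0 : Zchar U 0 = 0
  · rw [h0, norm_zero, div_zero, norm_zero]
    calc (0 : ℝ) ^ (2 * k) * (0 : ℝ) ^ r ≤ 1 * 1 := by
          gcongr <;> exact pow_le_one₀ le_rfl zero_le_one
      _ = 1 := by norm_num
      _ ≤ C0 ^ (2 * k) := one_le_pow₀ hC0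
  · have hZne : ‖Zchar U 0‖ ≠ 0 := norm_ne_zero_iff.mpr h0
    have hZnn : (0 : ℝ) ≤ ‖Zchar U 0‖ := norm_nonneg _
    rw [norm_div, div_pow]
    have hsplit : ‖Zchar U 0‖ ^ (2 * k) = ‖Zchar U 0‖ ^ (2 * k - r) * ‖Zchar U 0‖ ^ r := by
      rw [← pow_add]
      congr 1
      omega
    have e1 : ‖Zchar U 0‖ ^ (2 * k) * (‖D‖ ^ r / ‖Zchar U 0‖ ^ r)
        = ‖Zchar U 0‖ ^ (2 * k - r) * ‖D‖ ^ r := by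
      rw [hsplit, mul_assoc, ← mul_div_assoc, mul_comm (‖Zchar U 0‖ ^ r) (‖D‖ ^ r),
        mul_div_assoc, div_self (pow_ne_zero r hZne), mul_one]
    rw [e1]
    calc ‖Zchar U 0‖ ^ (2 * k - r) * ‖D‖ ^ r ≤ C0 ^ (2 * k - r) * C0 ^ r := by
          gcongr
      _ = C0 ^ (2 * k) := by
          rw [← pow_add]
          congr 1
          omega

theorem statement1 (N k h : ℕ) (hN : 1 ≤ N) (hkh : h ≤ k)
    (μham : Measure (Matrix.unitaryGroup (Fin N) ℂ))
    [μham.IsHaarMeasure] [IsProbabilityMeasure μham]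
    (θj : Matrix.unitaryGroup (Fin N) ℂ → Fin N → ℝ)
    (hθj : ∀ U : Matrix.unitaryGroup (Fin N) ℂ,
      (U : Matrix (Fin N) (Fin N) ℂ).charpoly
        = ∏ j, (Polynomial.X - Polynomial.C (Complex.exp (Complex.I * (θj U j : ℂ))))) :
    ((∫ U, ‖Vchar (θj U) U 0‖ ^ (2 * k)
        * ‖deriv (Vchar (θj U) U) 0 / Vchar (θj U) U 0‖ ^ (2 * h) ∂μham : ℝ) : ℂ)
      = ∑ j ∈ Finset.range (h + 1),
          (Nat.choose h j : ℂ) * (-(N : ℂ) ^ 2 / 4) ^ (h - j)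
            * ∑ l ∈ Finset.range (j + 1),
                (Complex.I * N) ^ (j - l) * (Nat.choose j l : ℂ) * Mmom N k (j + l) μham := by
  have hg : ∀ r, r ≤ 2 * k → Integrable (fun U : Matrix.unitaryGroup (Fin N) ℂ =>
      (‖Zchar U 0‖ : ℂ) ^ (2 * k) * (deriv (Zchar U) 0 / Zchar U 0) ^ r) μham :=
    fun r hr => integrable_g r hr μham θj hθj
  have hpt : ∀ U : Matrix.unitaryGroup (Fin N) ℂ,
      ((‖Vchar (θj U) U 0‖ ^ (2 * k)
          * ‖deriv (Vchar (θj U) U) 0 / Vchar (θj U) U 0‖ ^ (2 * h) : ℝ) : ℂ)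
        = ∑ j ∈ Finset.range (h + 1),
            (Nat.choose h j : ℂ) * (-(N : ℂ) ^ 2 / 4) ^ (h - j)
              * ∑ l ∈ Finset.range (j + 1),
                  (Complex.I * N) ^ (j - l) * (Nat.choose j l : ℂ)
                    * ((‖Zchar U 0‖ : ℂ) ^ (2 * k)
                        * (deriv (Zchar U) 0 / Zchar U 0) ^ (j + l)) := by
    intro U
    rw [master_pointwise hkh (θj U) U (hθj U),
      ← alg_sum N h (deriv (Zchar U) 0 / Zchar U 0)]
    simp only [Finset.mul_sum]
    exact Finset.sum_congr rfl fun j _ => Finset.sum_congr rfl fun l _ => by ring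
  calc ((∫ U, ‖Vchar (θj U) U 0‖ ^ (2 * k)
          * ‖deriv (Vchar (θj U) U) 0 / Vchar (θj U) U 0‖ ^ (2 * h) ∂μham : ℝ) : ℂ)
      = ∫ U, ((‖Vchar (θj U) U 0‖ ^ (2 * k)
          * ‖deriv (Vchar (θj U) U) 0 / Vchar (θj U) U 0‖ ^ (2 * h) : ℝ) : ℂ) ∂μham :=
        integral_ofReal.symm
    _ = ∫ U, (∑ j ∈ Finset.range (h + 1),
            (Nat.choose h j : ℂ) * (-(N : ℂ) ^ 2 / 4) ^ (h - j)
              * ∑ l ∈ Finset.range (j + 1),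
                  (Complex.I * N) ^ (j - l) * (Nat.choose j l : ℂ)
                    * ((‖Zchar U 0‖ : ℂ) ^ (2 * k)
                        * (deriv (Zchar U) 0 / Zchar U 0) ^ (j + l))) ∂μham :=
        integral_congr_ae (Filter.Eventually.of_forall hpt)
    _ = ∑ j ∈ Finset.range (h + 1),
          (Nat.choose h j : ℂ) * (-(N : ℂ) ^ 2 / 4) ^ (h - j)
            * ∑ l ∈ Finset.range (j + 1),
                (Complex.I * N) ^ (j - l) * (Nat.choose j l : ℂ) * Mmom N k (j + l) μham := by
        rw [integral_finset_sum _ (fun j hj => ?_)]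
        · refine Finset.sum_congr rfl fun j hj => ?_
          have hjh : j ≤ h := Nat.lt_succ_iff.mp (Finset.mem_range.mp hj)
          rw [integral_const_mul]
          congr 1
          rw [integral_finset_sum _ (fun l hl => ?_)]
          · refine Finset.sum_congr rfl fun l hl => ?_
            rw [integral_const_mul]
            rfl
          · have hlj : l ≤ j := Nat.lt_succ_iff.mp (Finset.mem_range.mp hl)
            exact (hg (j + l) (by omega)).const_mul _
        · have hjh : j ≤ h := Nat.lt_succ_iff.mp (Finset.mem_range.mp hj)
          refine Integrable.const_mul ?_ _
          refine integrable_finset_sum _ fun l hl => ?_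
          have hlj : l ≤ j := Nat.lt_succ_iff.mp (Finset.mem_range.mp hl)
          exact (hg (j + l) (by omega)).const_mul _
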